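/- Let {(Xᵢ,Yᵢ)}_{i=1}^n be i.i.d. with joint pmf p_{XY} on a product of finite alphabets 𝒳 × 𝒴, let ε, ε', b₁ > 0, and suppose ℙ[ f(Yⁿ) > ε' or f(Xⁿ,Yⁿ) > ε' ] ≤ 2^{−n b₁ ε}. Then ℙ[ (Xⁿ,Yⁿ) ∉ 𝒜_{ε,ε'}^{(n)}(X,Y) ] ≤ e^{n C_X^{(1)}(ε)} + e^{n C_X^{(2)}(ε)} + 2^{−n b₁ ε}. -/

import Mathlib

open Finset Real
open scoped Classical BigOperators

/-- Shannon entropy (in bits) of a pmf on a finite alphabet, with the convention `0 log 0 = 0`. -/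
noncomputable def shannonEntropy {W : Type*} [Fintype W] (q : W → ℝ) : ℝ :=
  - ∑ w, q w * Real.logb 2 (q w)

/-- Probability of an i.i.d. sequence: `p(wⁿ) = ∏ᵢ p(wᵢ)`. -/
noncomputable def seqProb {W : Type*} (q : W → ℝ) {n : ℕ} (w : Fin n → W) : ℝ :=
  ∏ i, q (w i)

/-- The deviation `f(wⁿ) = |−(1/n) log₂ p(wⁿ) − H(W)|` of the empirical entropy. -/
noncomputable def fdev {W : Type*} [Fintype W] (q : W → ℝ) {n : ℕ} (w : Fin n → W) : ℝ :=
  |(-(1 / (n : ℝ))) * Real.logb 2 (seqProb q w) - shannonEntropy q|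

/-- Chernoff exponent `C_W^{(1)}(ε) = inf_{s>0} ( ln 𝔼[q(W)^{−s/ln 2}] − s(H(W)+ε) )`. -/
noncomputable def chernoff1 {W : Type*} [Fintype W] (q : W → ℝ) (ε : ℝ) : ℝ :=
  sInf ((fun s : ℝ =>
    Real.log (∑ w ∈ Finset.univ.filter (fun w => 0 < q w), q w ^ (1 - s / Real.log 2))
      - s * (shannonEntropy q + ε)) '' Set.Ioi 0)

/-- Chernoff exponent `C_W^{(2)}(ε) = inf_{s>0} ( ln 𝔼[q(W)^{s/ln 2}] − s(−H(W)+ε) )`. -/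
noncomputable def chernoff2 {W : Type*} [Fintype W] (q : W → ℝ) (ε : ℝ) : ℝ :=
  sInf ((fun s : ℝ =>
    Real.log (∑ w ∈ Finset.univ.filter (fun w => 0 < q w), q w ^ (1 + s / Real.log 2))
      - s * (-shannonEntropy q + ε)) '' Set.Ioi 0)

/-- Marginal on the first component of a joint pmf. -/
noncomputable def margFst {X Y : Type*} [Fintype Y] (p : X × Y → ℝ) (x : X) : ℝ :=
  ∑ y, p (x, y)

/-- Marginal on the second component of a joint pmf. -/
noncomputable def margSnd {X Y : Type*} [Fintype X] (p : X × Y → ℝ) (y : Y) : ℝ :=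
  ∑ x, p (x, y)

/-- The sequence of pairs associated to a pair of sequences. -/
def pairSeq {X Y : Type*} {n : ℕ} (w : (Fin n → X) × (Fin n → Y)) : Fin n → X × Y :=
  fun i => (w.1 i, w.2 i)

/-- Joint probability `p(xⁿ,yⁿ) = ∏ᵢ p(xᵢ,yᵢ)` of a pair of i.i.d. sequences. -/
noncomputable def jointSeqProb {X Y : Type*} (p : X × Y → ℝ) {n : ℕ}
    (w : (Fin n → X) × (Fin n → Y)) : ℝ :=
  ∏ i, p (w.1 i, w.2 i)

/-- The typical set `𝒜_{ε,ε'}^{(n)}(X,Y)`: `f(xⁿ) ≤ ε`, `f(yⁿ) ≤ ε'`, `f(xⁿ,yⁿ) ≤ ε'`. -/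
def typical {X Y : Type*} [Fintype X] [Fintype Y] (p : X × Y → ℝ)
    (ε ε' : ℝ) {n : ℕ} (w : (Fin n → X) × (Fin n → Y)) : Prop :=
  fdev (margFst p) w.1 ≤ ε ∧ fdev (margSnd p) w.2 ≤ ε' ∧ fdev p (pairSeq w) ≤ ε'

/-- Conditional probability `ℙ[ (Xⁿ,Yⁿ) ∉ 𝒜_{ε,ε'}^{(n)}(X,Y) | Xⁿ = xⁿ ]`
(for `xⁿ` with `p(xⁿ) > 0`). -/
noncomputable def condNotTyp {X Y : Type*} [Fintype X] [Fintype Y] (p : X × Y → ℝ)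
    (ε ε' : ℝ) {n : ℕ} (xn : Fin n → X) : ℝ :=
  (∑ yn ∈ Finset.univ.filter (fun yn : Fin n → Y => ¬ typical p ε ε' (xn, yn)),
      jointSeqProb p (xn, yn)) / seqProb (margFst p) xn

section Aux

variable {W : Type*} [Fintype W]

lemma seqProb_nonneg (q : W → ℝ) (hq : ∀ x, 0 ≤ q x) {n : ℕ} (w : Fin n → W) :
    0 ≤ seqProb q w :=
  Finset.prod_nonneg fun _ _ => hq _

lemma sum_seqProb (q : W → ℝ) (n : ℕ) :
    ∑ w : Fin n → W, seqProb q w = (∑ x, q x) ^ n := by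
  have h : (∑ x, q x) ^ n = ∏ _i : Fin n, ∑ x, q x := by
    simp
  rw [h, Finset.prod_univ_sum]
  rw [Fintype.piFinset_univ]
  rfl

lemma tail_sum_le (q : W → ℝ) (hq : ∀ x, 0 ≤ q x) {n : ℕ}
    (T : Finset (Fin n → W)) (t a : ℝ)
    (hpt : ∀ w ∈ T, 0 < seqProb q w → seqProb q w ≤ seqProb q w ^ t * Real.exp a) :
    ∑ w ∈ T, seqProb q w ≤
      Real.exp a * (∑ x ∈ Finset.univ.filter (fun x => 0 < q x), q x ^ t) ^ n := by
  classical
  set S := Finset.univ.filter (fun x => 0 < q x) with hS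
  have key : ∑ w ∈ T, seqProb q w
      = ∑ w ∈ T.filter (fun w => seqProb q w ≠ 0), seqProb q w :=
    (Finset.sum_filter_ne_zero T).symm
  rw [key]
  have hsub : T.filter (fun w => seqProb q w ≠ 0) ⊆ Fintype.piFinset (fun _ : Fin n => S) := by
    intro w hw
    rw [Finset.mem_filter] at hw
    rw [Fintype.mem_piFinset]
    intro i
    simp only [hS, Finset.mem_filter, Finset.mem_univ, true_and]
    have hne : q (w i) ≠ 0 := by
      intro h0
      exact hw.2 (Finset.prod_eq_zero (Finset.mem_univ i) h0)
    exact lt_of_le_of_ne (hq _) (Ne.symm hne)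
  calc ∑ w ∈ T.filter (fun w => seqProb q w ≠ 0), seqProb q w
      ≤ ∑ w ∈ T.filter (fun w => seqProb q w ≠ 0), seqProb q w ^ t * Real.exp a := by
        apply Finset.sum_le_sum
        intro w hw
        rw [Finset.mem_filter] at hw
        exact hpt w hw.1 (lt_of_le_of_ne (seqProb_nonneg q hq w) (Ne.symm hw.2))
    _ ≤ ∑ w ∈ Fintype.piFinset (fun _ : Fin n => S), seqProb q w ^ t * Real.exp a := by
        apply Finset.sum_le_sum_of_subset_of_nonneg hsub
        intro w _ _
        exact mul_nonneg (Real.rpow_nonneg (seqProb_nonneg q hq w) t) (Real.exp_pos a).le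
    _ = Real.exp a * ∑ w ∈ Fintype.piFinset (fun _ : Fin n => S), ∏ i, q (w i) ^ t := by
        rw [Finset.mul_sum]
        apply Finset.sum_congr rfl
        intro w _
        rw [mul_comm]
        congr 1
        rw [seqProb, ← Real.finset_prod_rpow _ _ (fun i _ => hq (w i))]
    _ = Real.exp a * (∑ x ∈ S, q x ^ t) ^ n := by
        congr 1
        rw [← Finset.prod_univ_sum (fun _ : Fin n => S) (fun _ x => q x ^ t)]
        simp

lemma supp_sum_pos (q : W → ℝ) (hq : ∀ x, 0 ≤ q x) (hq1 : ∑ x, q x = 1) (t : ℝ) :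
    0 < ∑ x ∈ Finset.univ.filter (fun x => 0 < q x), q x ^ t := by
  have hne : (Finset.univ.filter (fun x => 0 < q x)).Nonempty := by
    by_contra h
    rw [Finset.not_nonempty_iff_eq_empty] at h
    have h0 : ∑ x, q x = 0 := by
      apply Finset.sum_eq_zero
      intro x _
      by_contra hx
      have hmem : x ∈ Finset.univ.filter (fun x => 0 < q x) := by
        simp [lt_of_le_of_ne (hq x) (Ne.symm hx)]
      rw [h] at hmem
      exact absurd hmem (Finset.notMem_empty x)
    rw [hq1] at h0; norm_num at h0
  apply Finset.sum_pos _ hne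
  intro x hx
  rw [Finset.mem_filter] at hx
  exact Real.rpow_pos_of_pos hx.2 t

lemma tail1_bound_s (q : W → ℝ) (hq : ∀ x, 0 ≤ q x) (hq1 : ∑ x, q x = 1)
    {n : ℕ} (hn : 0 < n) {ε s : ℝ} (hs : 0 < s) :
    ∑ w ∈ Finset.univ.filter (fun w : Fin n → W =>
        ε < (-(1 / (n : ℝ))) * Real.logb 2 (seqProb q w) - shannonEntropy q),
      seqProb q w
    ≤ Real.exp ((n : ℝ) *
        (Real.log (∑ x ∈ Finset.univ.filter (fun x => 0 < q x), q x ^ (1 - s / Real.log 2))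
          - s * (shannonEntropy q + ε))) := by
  have hnR : (0:ℝ) < n := Nat.cast_pos.mpr hn
  have hlog2 : (0:ℝ) < Real.log 2 := Real.log_pos (by norm_num)
  set H := shannonEntropy q with hH
  set t : ℝ := 1 - s / Real.log 2 with ht
  set a : ℝ := -(s * ((n:ℝ) * (H + ε))) with ha
  have step := tail_sum_le q hq
    (Finset.univ.filter (fun w : Fin n → W =>
        ε < (-(1 / (n : ℝ))) * Real.logb 2 (seqProb q w) - H)) t a ?_
  · refine step.trans ?_
    set S := ∑ x ∈ Finset.univ.filter (fun x => 0 < q x), q x ^ t with hSdef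
    have hSpos : 0 < S := supp_sum_pos q hq hq1 t
    have hpow : S ^ n = Real.exp ((n:ℝ) * Real.log S) := by
      rw [← Real.log_pow, Real.exp_log (pow_pos hSpos n)]
    rw [hpow, ← Real.exp_add]
    apply Real.exp_le_exp.mpr
    rw [ha]; ring_nf; rfl
  · intro w hw hP
    rw [Finset.mem_filter] at hw
    have h := hw.2
    set P := seqProb q w with hPdef
    have hkey : 0 ≤ -Real.logb 2 P - (n:ℝ) * (H + ε) := by
      have h2 : (n:ℝ) * ε < (n:ℝ) * ((-(1 / (n : ℝ))) * Real.logb 2 P - H) :=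
        (mul_lt_mul_iff_right₀ hnR).mpr h
      have h3 : (n:ℝ) * ((-(1 / (n : ℝ))) * Real.logb 2 P - H)
          = -Real.logb 2 P - (n:ℝ) * H := by
        field_simp
        try ring
      rw [h3] at h2
      linarith
    have hrw : P ^ t * Real.exp a
        = Real.exp (Real.log P + s * (-Real.logb 2 P - (n:ℝ) * (H + ε))) := by
      rw [Real.rpow_def_of_pos hP, ← Real.exp_add]
      congr 1
      rw [ht, ha, Real.logb]
      field_simp
      ring
    rw [hrw]
    calc P = Real.exp (Real.log P) := (Real.exp_log hP).symm
      _ ≤ _ := Real.exp_le_exp.mpr (by nlinarith)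

lemma tail2_bound_s (q : W → ℝ) (hq : ∀ x, 0 ≤ q x) (hq1 : ∑ x, q x = 1)
    {n : ℕ} (hn : 0 < n) {ε s : ℝ} (hs : 0 < s) :
    ∑ w ∈ Finset.univ.filter (fun w : Fin n → W =>
        ε < -((-(1 / (n : ℝ))) * Real.logb 2 (seqProb q w) - shannonEntropy q)),
      seqProb q w
    ≤ Real.exp ((n : ℝ) *
        (Real.log (∑ x ∈ Finset.univ.filter (fun x => 0 < q x), q x ^ (1 + s / Real.log 2))
          - s * (-shannonEntropy q + ε))) := by
  have hnR : (0:ℝ) < n := Nat.cast_pos.mpr hn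
  have hlog2 : (0:ℝ) < Real.log 2 := Real.log_pos (by norm_num)
  set H := shannonEntropy q with hH
  set t : ℝ := 1 + s / Real.log 2 with ht
  set a : ℝ := -(s * ((n:ℝ) * (-H + ε))) with ha
  have step := tail_sum_le q hq
    (Finset.univ.filter (fun w : Fin n → W =>
        ε < -((-(1 / (n : ℝ))) * Real.logb 2 (seqProb q w) - H))) t a ?_
  · refine step.trans ?_
    set S := ∑ x ∈ Finset.univ.filter (fun x => 0 < q x), q x ^ t with hSdef
    have hSpos : 0 < S := supp_sum_pos q hq hq1 t
    have hpow : S ^ n = Real.exp ((n:ℝ) * Real.log S) := by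
      rw [← Real.log_pow, Real.exp_log (pow_pos hSpos n)]
    rw [hpow, ← Real.exp_add]
    apply Real.exp_le_exp.mpr
    rw [ha]; ring_nf; rfl
  · intro w hw hP
    rw [Finset.mem_filter] at hw
    have h := hw.2
    set P := seqProb q w with hPdef
    have hkey : 0 ≤ Real.logb 2 P - (n:ℝ) * (-H + ε) := by
      have h2 : (n:ℝ) * ε < (n:ℝ) * (-((-(1 / (n : ℝ))) * Real.logb 2 P - H)) :=
        (mul_lt_mul_iff_right₀ hnR).mpr h
      have h3 : (n:ℝ) * (-((-(1 / (n : ℝ))) * Real.logb 2 P - H))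
          = Real.logb 2 P + (n:ℝ) * H := by
        field_simp
        try ring
      rw [h3] at h2
      linarith
    have hrw : P ^ t * Real.exp a
        = Real.exp (Real.log P + s * (Real.logb 2 P - (n:ℝ) * (-H + ε))) := by
      rw [Real.rpow_def_of_pos hP, ← Real.exp_add]
      congr 1
      rw [ht, ha, Real.logb]
      field_simp
      ring
    rw [hrw]
    calc P = Real.exp (Real.log P) := (Real.exp_log hP).symm
      _ ≤ _ := Real.exp_le_exp.mpr (by nlinarith)

lemma le_exp_n_sInf {A : ℝ} {n : ℕ} (hn : 0 < n) {g : ℝ → ℝ}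
    (hA : ∀ s : ℝ, 0 < s → A ≤ Real.exp ((n:ℝ) * g s)) :
    A ≤ Real.exp ((n:ℝ) * sInf (g '' Set.Ioi 0)) := by
  by_cases hA0 : A ≤ 0
  · exact hA0.trans (Real.exp_pos _).le
  push_neg at hA0
  have hnR : (0:ℝ) < n := Nat.cast_pos.mpr hn
  have hlb : Real.log A / n ≤ sInf (g '' Set.Ioi 0) := by
    apply le_csInf (Set.Nonempty.image g ⟨1, by norm_num⟩)
    rintro y ⟨s, hs, rfl⟩
    have h1 := hA s hs
    have hlog : Real.log A ≤ (n:ℝ) * g s := by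
      have h2 := Real.log_le_log hA0 h1
      rwa [Real.log_exp] at h2
    rw [div_le_iff₀ hnR]
    linarith
  have h3 : Real.log A ≤ (n:ℝ) * sInf (g '' Set.Ioi 0) := by
    rw [div_le_iff₀ hnR] at hlb; linarith
  calc A = Real.exp (Real.log A) := (Real.exp_log hA0).symm
    _ ≤ _ := Real.exp_le_exp.mpr h3

lemma fdev_tail (q : W → ℝ) (hq : ∀ x, 0 ≤ q x) (hq1 : ∑ x, q x = 1)
    (n : ℕ) {ε : ℝ} (hε : 0 < ε) :
    ∑ w ∈ Finset.univ.filter (fun w : Fin n → W => ε < fdev q w), seqProb q w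
      ≤ Real.exp ((n : ℝ) * chernoff1 q ε) + Real.exp ((n : ℝ) * chernoff2 q ε) := by
  rcases Nat.eq_zero_or_pos n with hn | hn
  · subst hn
    have h1 : ∑ w ∈ Finset.univ.filter (fun w : Fin 0 → W => ε < fdev q w), seqProb q w
        ≤ ∑ w : Fin 0 → W, seqProb q w :=
      Finset.sum_le_sum_of_subset_of_nonneg (Finset.filter_subset _ _)
        (fun w _ _ => seqProb_nonneg q hq w)
    rw [sum_seqProb, hq1, one_pow] at h1
    have := Real.exp_pos ((0:ℝ) * chernoff1 q ε)
    have := Real.exp_pos ((0:ℝ) * chernoff2 q ε)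
    simp only [Nat.cast_zero, zero_mul, Real.exp_zero]
    linarith [h1]
  · have hsplit : ∀ w ∈ (Finset.univ : Finset (Fin n → W)), (ε < fdev q w) ↔
        ((ε < (-(1/(n:ℝ))) * Real.logb 2 (seqProb q w) - shannonEntropy q) ∨
         (ε < -((-(1/(n:ℝ))) * Real.logb 2 (seqProb q w) - shannonEntropy q))) :=
      fun w _ => lt_abs
    rw [Finset.filter_congr hsplit, Finset.filter_or]
    set T1 := Finset.univ.filter (fun w : Fin n → W =>
        ε < (-(1/(n:ℝ))) * Real.logb 2 (seqProb q w) - shannonEntropy q) with hT1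
    set T2 := Finset.univ.filter (fun w : Fin n → W =>
        ε < -((-(1/(n:ℝ))) * Real.logb 2 (seqProb q w) - shannonEntropy q)) with hT2
    have hunion : ∑ w ∈ T1 ∪ T2, seqProb q w
        ≤ ∑ w ∈ T1, seqProb q w + ∑ w ∈ T2, seqProb q w := by
      have h := Finset.sum_union_inter (s₁ := T1) (s₂ := T2) (f := fun w => seqProb q w)
      have h0 : 0 ≤ ∑ w ∈ T1 ∩ T2, seqProb q w :=
        Finset.sum_nonneg fun w _ => seqProb_nonneg q hq w
      linarith
    refine hunion.trans (add_le_add ?_ ?_)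
    · exact le_exp_n_sInf hn (fun s hs => tail1_bound_s q hq hq1 hn hs)
    · exact le_exp_n_sInf hn (fun s hs => tail2_bound_s q hq hq1 hn hs)

end Aux

/-- If `ℙ[ f(Yⁿ) > ε' or f(Xⁿ,Yⁿ) > ε' ] ≤ 2^{−n b₁ ε}`, then
`ℙ[ (Xⁿ,Yⁿ) ∉ 𝒜_{ε,ε'}^{(n)}(X,Y) ] ≤ e^{n C_X^{(1)}(ε)} + e^{n C_X^{(2)}(ε)} + 2^{−n b₁ ε}`. -/
theorem prob_not_typical_bound
    {X Y : Type*} [Fintype X] [Fintype Y] (p : X × Y → ℝ)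
    (hp : ∀ xy, 0 ≤ p xy) (hsum : ∑ xy, p xy = 1)
    (n : ℕ) (ε ε' b₁ : ℝ) (hε : 0 < ε) (hε' : 0 < ε') (hb₁ : 0 < b₁)
    (hhyp : ∑ w ∈ Finset.univ.filter (fun w : (Fin n → X) × (Fin n → Y) =>
          fdev (margSnd p) w.2 > ε' ∨ fdev p (pairSeq w) > ε'),
        jointSeqProb p w ≤ (2 : ℝ) ^ (-((n : ℝ) * b₁ * ε))) :
    ∑ w ∈ Finset.univ.filter (fun w : (Fin n → X) × (Fin n → Y) => ¬ typical p ε ε' w),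
        jointSeqProb p w
      ≤ Real.exp ((n : ℝ) * chernoff1 (margFst p) ε)
        + Real.exp ((n : ℝ) * chernoff2 (margFst p) ε)
        + (2 : ℝ) ^ (-((n : ℝ) * b₁ * ε)) := by
  
  classical
  have hq : ∀ x, 0 ≤ margFst p x := fun x => Finset.sum_nonneg fun y _ => hp (x, y)
  have hq1 : ∑ x, margFst p x = 1 := by
    rw [← hsum, Fintype.sum_prod_type]
    rfl
  have hjnn : ∀ w : (Fin n → X) × (Fin n → Y), 0 ≤ jointSeqProb p w :=
    fun w => Finset.prod_nonneg fun i _ => hp _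
  have hiff : ∀ w ∈ (Finset.univ : Finset ((Fin n → X) × (Fin n → Y))),
      (¬ typical p ε ε' w) ↔
      ((ε < fdev (margFst p) w.1) ∨
       (fdev (margSnd p) w.2 > ε' ∨ fdev p (pairSeq w) > ε')) := by
    intro w _
    simp only [typical, not_and_or, not_le, gt_iff_lt]
  rw [Finset.filter_congr hiff, Finset.filter_or]
  set S1 := Finset.univ.filter
      (fun w : (Fin n → X) × (Fin n → Y) => ε < fdev (margFst p) w.1) with hS1
  set S2 := Finset.univ.filter (fun w : (Fin n → X) × (Fin n → Y) =>
      fdev (margSnd p) w.2 > ε' ∨ fdev p (pairSeq w) > ε') with hS2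
  have hunion : ∑ w ∈ S1 ∪ S2, jointSeqProb p w
      ≤ ∑ w ∈ S1, jointSeqProb p w + ∑ w ∈ S2, jointSeqProb p w := by
    have h := Finset.sum_union_inter (s₁ := S1) (s₂ := S2) (f := fun w => jointSeqProb p w)
    have h0 : 0 ≤ ∑ w ∈ S1 ∩ S2, jointSeqProb p w := Finset.sum_nonneg fun w _ => hjnn w
    linarith
  refine hunion.trans ?_
  have hmarg : ∀ xn : Fin n → X, ∑ yn : Fin n → Y, jointSeqProb p (xn, yn)
      = seqProb (margFst p) xn := by
    intro xn
    have h1 : ∑ yn : Fin n → Y, jointSeqProb p (xn, yn)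
        = ∑ yn ∈ Fintype.piFinset (fun _ : Fin n => (Finset.univ : Finset Y)),
            ∏ i, p (xn i, yn i) := by rw [Fintype.piFinset_univ]; rfl
    have h2 := Finset.prod_univ_sum (fun _ : Fin n => (Finset.univ : Finset Y))
      (fun i y => p (xn i, y))
    rw [h1, ← h2]
    rfl
  have hsum1 : ∑ w ∈ S1, jointSeqProb p w
      = ∑ xn ∈ Finset.univ.filter (fun xn : Fin n → X => ε < fdev (margFst p) xn),
          seqProb (margFst p) xn := by
    rw [hS1, Finset.sum_filter, Finset.sum_filter, Fintype.sum_prod_type]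
    apply Finset.sum_congr rfl
    intro xn _
    by_cases hx : ε < fdev (margFst p) xn
    · simp only [hx, if_true]
      exact hmarg xn
    · simp [hx]
  have h2 := fdev_tail (margFst p) hq hq1 n hε
  rw [hsum1]
  linarith [hhyp]
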